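/- (Theorem 2, cost bound.) Let ℓ^t = w_t·ℓ̲ + (1 − w_t)·ℓ̄ be the boundary-design games, assume additionally that ℓ_i^o(a) ∈ [L, U] for every i and every a ∈ 𝒜, and let a^1,…,a^T : Ω → 𝒜 be random action profiles on a probability space (Ω, ℱ, ℙ). Let η > 0, p ≥ 1 be reals and let the per-round design costs c_1,…,c_T be random variables satisfying 0 ≤ c_t ≤ η·‖ℓ^o(a^t) − ℓ^t(a^t)‖_p for each t, where ‖x‖_p = (Σ_{i=1}^M |x_i|^p)^{1/p}. Then the expected cumulative design cost satisfies E[Σ_{t=1}^T c_t] ≤ η·(U−L)·M^{1/p}·(T − E[N^T]) + η·(U−L)·M^{1/p}·(T^c)/c, where N^T = #{t ≤ T : a^t = a†}. -/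

import Mathlib

open Finset MeasureTheory

private lemma tangent_ineq' {c x : ℝ} (hc0 : 0 < c) (hc1 : c ≤ 1) (hx : 0 ≤ x) :
    c * (x + 1) ^ (c - 1) ≤ (x + 1) ^ c - x ^ c := by
  have hy : (0:ℝ) < x + 1 := by linarith
  have hu0 : 0 ≤ x / (x + 1) := div_nonneg hx hy.le
  have key : (x / (x+1)) ^ c ≤ c * (x / (x+1)) + (1 - c) * 1 := by
    simpa using Real.geom_mean_le_arith_mean2_weighted hc0.le (by linarith : (0:ℝ) ≤ 1 - c)
      hu0 zero_le_one (by ring)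
  have hxc : x ^ c = (x / (x+1)) ^ c * (x + 1) ^ c := by
    rw [← Real.mul_rpow hu0 hy.le, div_mul_cancel₀ _ hy.ne']
  have hpow : (x + 1) ^ (c - 1) = (x + 1) ^ c / (x + 1) := by
    rw [Real.rpow_sub hy, Real.rpow_one]
  have hposc : 0 < (x+1:ℝ) ^ c := Real.rpow_pos_of_pos hy c
  have h2 : x ^ c ≤ (1 - c / (x+1)) * (x+1) ^ c := by
    rw [hxc]
    apply mul_le_mul_of_nonneg_right _ hposc.le
    calc (x/(x+1))^c ≤ c * (x/(x+1)) + (1-c)*1 := key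
      _ = 1 - c/(x+1) := by field_simp; ring
  have h3 : (1 - c/(x+1)) * (x+1)^c = (x+1)^c - c * ((x+1)^c / (x+1)) := by
    field_simp
  rw [hpow]
  rw [h3] at h2
  linarith

private lemma sum_rpow_le' {c : ℝ} (hc0 : 0 < c) (hc1 : c ≤ 1) (T : ℕ) (hT : 1 ≤ T) :
    ∑ t ∈ Finset.Icc 1 T, (t:ℝ) ^ (c-1) ≤ (T:ℝ) ^ c / c := by
  induction T, hT using Nat.le_induction with
  | base =>
    simp only [Finset.Icc_self, Finset.sum_singleton, Nat.cast_one, Real.one_rpow]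
    rw [le_div_iff₀ hc0]; linarith
  | succ n hn ih =>
    rw [Finset.sum_Icc_succ_top (by omega)]
    have ht := tangent_ineq' hc0 hc1 (Nat.cast_nonneg n : (0:ℝ) ≤ n)
    push_cast
    have h1 : ((n:ℝ)+1) ^ (c-1) ≤ (((n:ℝ)+1) ^ c - (n:ℝ) ^ c)/c := by
      rw [le_div_iff₀ hc0]; linarith
    have h2 : (n:ℝ)^c/c + (((n:ℝ)+1)^c - (n:ℝ)^c)/c = ((n:ℝ)+1)^c/c := by
      field_simp; ring
    linarith

/-- Theorem 2, cost bound: under the boundary-design games, if the per-round design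
cost is at most `η` times the `p`-norm of the loss deviation at the played
profile, then the expected cumulative design cost is at most
`η (U-L) M^(1/p) (T - E[N^T]) + η (U-L) M^(1/p) T^c / c`. -/
theorem boundary_design_cost_bound
    {M : ℕ} (hM : 2 ≤ M)
    {A : Fin M → Type} [∀ i, Fintype (A i)] [∀ i, Nonempty (A i)]
    [∀ i, DecidableEq (A i)]
    (L U : ℝ) (hLU : L < U)
    (adag : ∀ i, A i)
    (ρ : ℝ) (hρ0 : 0 < ρ) (hρU : ρ ≤ (U - L) / 2)
    (ℓo : (∀ i, A i) → Fin M → ℝ)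
    (hℓo : ∀ i, ℓo adag i ∈ Set.Icc (L + ρ) (U - ρ))
    (v : Fin M → ℝ) (hv : ∀ i, v i ∈ Set.Icc (L + ρ) (U - ρ))
    (ℓund : (∀ i, A i) → Fin M → ℝ)
    (hℓund : ∀ a i, ℓund a i =
      if a i = adag i
      then v i - (1 - ((univ.filter fun j => a j = adag j).card : ℝ) / M) * ρ
      else v i + (((univ.filter fun j => a j = adag j).card : ℝ) / M) * ρ)
    (c : ℝ) (hc : c ∈ Set.Ioc (0 : ℝ) 1)
    (ℓt : ℕ → (∀ i, A i) → Fin M → ℝ)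
    (hℓt : ∀ (t : ℕ) (a : ∀ i, A i) (i : Fin M), ℓt t a i =
      (t : ℝ) ^ (c - 1) * ℓund a i + (1 - (t : ℝ) ^ (c - 1)) * ℓo adag i)
    (hrange : ∀ (i : Fin M) (a : ∀ j, A j), ℓo a i ∈ Set.Icc L U)
    {Ω : Type} [MeasurableSpace Ω] (P : Measure Ω) [IsProbabilityMeasure P]
    [∀ i, MeasurableSpace (A i)] [∀ i, MeasurableSingletonClass (A i)]
    (T : ℕ) (hT : 1 ≤ T) (ap : ℕ → Ω → ∀ j, A j)
    (hmeas : ∀ t, Measurable (ap t))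
    (η p : ℝ) (hη : 0 < η) (hp : 1 ≤ p)
    (cst : ℕ → Ω → ℝ)
    (hcst : ∀ t ∈ Finset.Icc 1 T, ∀ ω, 0 ≤ cst t ω ∧
      cst t ω ≤ η * (∑ i, |ℓo (ap t ω) i - ℓt t (ap t ω) i| ^ p) ^ (1 / p)) :
    ∫ ω, ∑ t ∈ Finset.Icc 1 T, cst t ω ∂P
      ≤ η * (U - L) * (M : ℝ) ^ (1 / p)
          * ((T : ℝ)
              - ∫ ω, (((Finset.Icc 1 T).filter fun t => ap t ω = adag).card : ℝ) ∂P)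
        + η * (U - L) * (M : ℝ) ^ (1 / p) * (T : ℝ) ^ c / c := by
  obtain ⟨hc0, hc1⟩ := hc
  have hp0 : (0:ℝ) < p := lt_of_lt_of_le one_pos hp
  have hUL : (0:ℝ) < U - L := sub_pos.mpr hLU
  have hMpos : (0:ℝ) < M := by
    have : (2:ℝ) ≤ M := by exact_mod_cast hM
    linarith
  set K : ℝ := η * (U - L) * (M : ℝ) ^ (1 / p) with hK
  have hK0 : 0 ≤ K :=
    mul_nonneg (mul_nonneg hη.le hUL.le) (Real.rpow_nonneg (Nat.cast_nonneg M) _)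
  have habs : ∀ x y : ℝ, x ∈ Set.Icc L U → y ∈ Set.Icc L U → |x - y| ≤ U - L := by
    rintro x y ⟨h1, h2⟩ ⟨h3, h4⟩
    rw [abs_le]; constructor <;> linarith
  -- range of the source game
  have hℓund_range : ∀ a i, ℓund a i ∈ Set.Icc L U := by
    intro a i
    have hd0 : (0:ℝ) ≤ ((univ.filter fun j => a j = adag j).card : ℝ) / M := by positivity
    have hd1 : ((univ.filter fun j => a j = adag j).card : ℝ) / M ≤ 1 := by
      rw [div_le_one hMpos]
      exact_mod_cast (Finset.card_filter_le _ _).trans_eq (by simp)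
    obtain ⟨hv1, hv2⟩ := hv i
    rw [hℓund a i]
    split <;> constructor <;> nlinarith
  -- per-round pointwise bound
  have key : ∀ t ∈ Finset.Icc 1 T, ∀ ω,
      cst t ω ≤ K * ((if ap t ω = adag then (0:ℝ) else 1) + (t:ℝ) ^ (c-1)) := by
    intro t ht ω
    obtain ⟨ht1, _⟩ := Finset.mem_Icc.mp ht
    have htR : (1:ℝ) ≤ t := by exact_mod_cast ht1
    set a := ap t ω with ha
    set w := (t:ℝ) ^ (c-1) with hw
    have hw0 : 0 < w := Real.rpow_pos_of_pos (by linarith) _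
    have hw1 : w ≤ 1 := Real.rpow_le_one_of_one_le_of_nonpos htR (by linarith)
    set χ : ℝ := if a = adag then (0:ℝ) else 1 with hχdef
    have hχ0 : 0 ≤ χ := by rw [hχdef]; split <;> norm_num
    have hB0 : 0 ≤ (χ + w) * (U - L) := mul_nonneg (by linarith) hUL.le
    have hdev : ∀ i, |ℓo a i - ℓt t a i| ≤ (χ + w) * (U - L) := by
      intro i
      by_cases hcase : a = adag
      · have hχ : χ = 0 := if_pos hcase
        rw [hcase]
        have he : ℓo adag i - ℓt t adag i = w * (ℓo adag i - ℓund adag i) := by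
          rw [hℓt]; ring
        rw [he, hχ, abs_mul, abs_of_pos hw0, zero_add]
        exact mul_le_mul_of_nonneg_left (habs _ _ (hrange i adag) (hℓund_range adag i)) hw0.le
      · have hχ : χ = 1 := if_neg hcase
        have he : ℓo a i - ℓt t a i = (ℓo a i - ℓo adag i) + w * (ℓo adag i - ℓund a i) := by
          rw [hℓt]; ring
        rw [he, hχ]
        calc |(ℓo a i - ℓo adag i) + w * (ℓo adag i - ℓund a i)|
            ≤ |ℓo a i - ℓo adag i| + |w * (ℓo adag i - ℓund a i)| := abs_add_le _ _
          _ ≤ (U - L) + w * (U - L) := by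
              refine add_le_add (habs _ _ (hrange i a) (hrange i adag)) ?_
              rw [abs_mul, abs_of_pos hw0]
              exact mul_le_mul_of_nonneg_left (habs _ _ (hrange i adag) (hℓund_range a i)) hw0.le
          _ = (1 + w) * (U - L) := by ring
    have hsum : (∑ i, |ℓo a i - ℓt t a i| ^ p) ^ (1/p)
        ≤ (M:ℝ) ^ (1/p) * ((χ + w) * (U - L)) := by
      have h1 : (∑ i, |ℓo a i - ℓt t a i| ^ p) ≤ (M:ℝ) * ((χ + w) * (U - L)) ^ p := by
        calc (∑ i, |ℓo a i - ℓt t a i| ^ p)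
            ≤ ∑ _i : Fin M, ((χ + w) * (U - L)) ^ p :=
              Finset.sum_le_sum fun i _ => Real.rpow_le_rpow (abs_nonneg _) (hdev i) hp0.le
          _ = (M:ℝ) * ((χ + w) * (U - L)) ^ p := by
              rw [Finset.sum_const, Finset.card_univ, Fintype.card_fin, nsmul_eq_mul]
      calc (∑ i, |ℓo a i - ℓt t a i| ^ p) ^ (1/p)
          ≤ ((M:ℝ) * ((χ + w) * (U - L)) ^ p) ^ (1/p) := by
            refine Real.rpow_le_rpow ?_ h1 (by positivity)
            exact Finset.sum_nonneg fun i _ => Real.rpow_nonneg (abs_nonneg _) p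
        _ = (M:ℝ) ^ (1/p) * ((χ + w) * (U - L)) := by
            rw [Real.mul_rpow (Nat.cast_nonneg M) (Real.rpow_nonneg hB0 p),
              ← Real.rpow_mul hB0, mul_one_div_cancel hp0.ne', Real.rpow_one]
    calc cst t ω ≤ η * (∑ i, |ℓo a i - ℓt t a i| ^ p) ^ (1/p) := (hcst t ht ω).2
      _ ≤ η * ((M:ℝ) ^ (1/p) * ((χ + w) * (U - L))) := mul_le_mul_of_nonneg_left hsum hη.le
      _ = K * (χ + w) := by rw [hK]; ring
  -- count identity
  have hχsum : ∀ ω, ∑ t ∈ Finset.Icc 1 T, (if ap t ω = adag then (0:ℝ) else 1)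
      = (T:ℝ) - (((Finset.Icc 1 T).filter fun t => ap t ω = adag).card : ℝ) := by
    intro ω
    have hcard : (((Finset.Icc 1 T).filter fun t => ap t ω = adag).card : ℝ)
        = ∑ t ∈ Finset.Icc 1 T, (if ap t ω = adag then (1:ℝ) else 0) := by
      rw [Finset.card_filter]
      push_cast
      rfl
    have hadd : (∑ t ∈ Finset.Icc 1 T, (if ap t ω = adag then (0:ℝ) else 1))
        + (∑ t ∈ Finset.Icc 1 T, (if ap t ω = adag then (1:ℝ) else 0)) = (T:ℝ) := by
      rw [← Finset.sum_add_distrib]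
      have h1 : ∀ t ∈ Finset.Icc 1 T,
          ((if ap t ω = adag then (0:ℝ) else 1) + (if ap t ω = adag then (1:ℝ) else 0)) = 1 := by
        intro t _; split <;> ring
      rw [Finset.sum_congr rfl h1, Finset.sum_const, Nat.card_Icc]
      simp
    rw [hcard]
    linarith
  set S : ℝ := ∑ t ∈ Finset.Icc 1 T, (t:ℝ) ^ (c-1) with hS
  have hSle : S ≤ (T:ℝ) ^ c / c := sum_rpow_le' hc0 hc1 T hT
  -- integrability of the count
  have hNint : Integrable
      (fun ω => (((Finset.Icc 1 T).filter fun t => ap t ω = adag).card : ℝ)) P := by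
    have heq : (fun ω => (((Finset.Icc 1 T).filter fun t => ap t ω = adag).card : ℝ))
        = fun ω => ∑ t ∈ Finset.Icc 1 T, (if ap t ω = adag then (1:ℝ) else 0) := by
      funext ω
      rw [Finset.card_filter]
      push_cast
      rfl
    rw [heq]
    apply integrable_finset_sum
    intro t _
    have heq2 : (fun ω => if ap t ω = adag then (1:ℝ) else 0)
        = Set.indicator ((ap t) ⁻¹' {adag}) (fun _ => 1) := by
      funext ω; by_cases h : ap t ω = adag <;> simp [Set.indicator_apply, h]
    rw [heq2]
    exact (integrable_const 1).indicator ((hmeas t) (measurableSet_singleton _))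
  -- the dominating function
  set g : Ω → ℝ := fun ω =>
    K * ((T:ℝ) + S) - K * (((Finset.Icc 1 T).filter fun t => ap t ω = adag).card : ℝ) with hg
  have hgint : Integrable g P := (integrable_const (K * ((T:ℝ) + S))).sub (hNint.const_mul K)
  have hle : ∀ ω, ∑ t ∈ Finset.Icc 1 T, cst t ω ≤ g ω := by
    intro ω
    calc ∑ t ∈ Finset.Icc 1 T, cst t ω
        ≤ ∑ t ∈ Finset.Icc 1 T, K * ((if ap t ω = adag then (0:ℝ) else 1) + (t:ℝ) ^ (c-1)) :=
          Finset.sum_le_sum fun t ht => key t ht ω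
      _ = K * ((∑ t ∈ Finset.Icc 1 T, (if ap t ω = adag then (0:ℝ) else 1)) + S) := by
          rw [← Finset.mul_sum, Finset.sum_add_distrib]
      _ = g ω := by rw [hχsum ω, hg]; ring
  have hmain : ∫ ω, ∑ t ∈ Finset.Icc 1 T, cst t ω ∂P ≤ ∫ ω, g ω ∂P := by
    refine integral_mono_of_nonneg ?_ hgint ?_
    · exact Filter.Eventually.of_forall fun ω =>
        Finset.sum_nonneg fun t ht => (hcst t ht ω).1
    · exact Filter.Eventually.of_forall hle
  have hgval : ∫ ω, g ω ∂P = K * ((T:ℝ) + S)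
      - K * ∫ ω, (((Finset.Icc 1 T).filter fun t => ap t ω = adag).card : ℝ) ∂P := by
    rw [hg]
    rw [integral_sub (integrable_const _) (hNint.const_mul K), integral_const,
      integral_const_mul]
    simp [measure_univ]
  refine hmain.trans ?_
  rw [hgval]
  set E := ∫ ω, (((Finset.Icc 1 T).filter fun t => ap t ω = adag).card : ℝ) ∂P with hE
  have hfin' : K * S ≤ K * (T:ℝ) ^ c / c := by
    rw [mul_div_assoc]; exact mul_le_mul_of_nonneg_left hSle hK0
  calc K * ((T:ℝ) + S) - K * E = K * ((T:ℝ) - E) + K * S := by ring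
    _ ≤ K * ((T:ℝ) - E) + K * (T:ℝ) ^ c / c := add_le_add (le_refl _) hfin'
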